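/- Let g be a finite-dimensional Lie algebra over a field k of characteristic 0 with nondegenerate Killing form, and let h ∈ g give a short grading g = g(−1) ⊕ g(0) ⊕ g(1), where g(i) = {z ∈ g | [h,z] = 2 i z}. Let e ∈ g(1) satisfy [g(0), e] = g(1). Then z_g(e) ∩ g(−1) = 0 and z_g(e) = (z_g(e) ∩ g(0)) ⊕ g(1). -/

import Mathlib

open Module

section Defs

variable (k : Type*) [Field k] (g : Type*) [LieRing g] [LieAlgebra k g]

/-- The eigenspace of `ad h` with eigenvalue `c`, as a submodule:
`{z ∈ g | [h, z] = c • z}`.  For a short grading, `g(i) = adEigenspace k g h (2 * i)`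
for `i = -1, 0, 1`. -/
def adEigenspace (h : g) (c : k) : Submodule k g where
  carrier := {z | ⁅h, z⁆ = c • z}
  add_mem' {a b} ha hb := by
    simp only [Set.mem_setOf_eq] at ha hb ⊢
    rw [lie_add, ha, hb, smul_add]
  zero_mem' := by simp
  smul_mem' t a ha := by
    simp only [Set.mem_setOf_eq] at ha ⊢
    rw [lie_smul, ha, smul_comm]

end Defs

section Defs2

variable (k : Type*) [Field k] (g : Type*) [LieRing g] [LieAlgebra k g]

/-- The centraliser `z_g(e) = {z ∈ g | [z,e] = 0}` of an element `e`, as a submodule. -/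
def centralizerSubmodule (e : g) : Submodule k g where
  carrier := {z | ⁅z, e⁆ = 0}
  add_mem' {a b} ha hb := by
    simp only [Set.mem_setOf_eq] at ha hb ⊢
    rw [add_lie, ha, hb, add_zero]
  zero_mem' := zero_lie e
  smul_mem' t a ha := by
    simp only [Set.mem_setOf_eq] at ha ⊢
    rw [smul_lie, ha, smul_zero]

/-- Right bracket with `e`, i.e. the linear map `z ↦ [z, e]`. -/
def lieRight (e : g) : g →ₗ[k] g where
  toFun z := ⁅z, e⁆
  map_add' a b := add_lie a b e
  map_smul' t a := by simp [smul_lie]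

end Defs2

/-- Let `g` be a finite-dimensional Lie algebra over a field `k` of
characteristic 0 with nondegenerate Killing form, with a short grading
`g = g(-1) ⊕ g(0) ⊕ g(1)` given by `h ∈ g`, where `g(i) = {z | [h,z] = 2 i z}`.
Let `e ∈ g(1)` satisfy `[g(0), e] = g(1)`.  Then `z_g(e) ∩ g(-1) = 0` and
`z_g(e) = (z_g(e) ∩ g(0)) ⊕ g(1)`. -/
theorem centralizer_of_dense_orbit_element
    (k : Type*) [Field k] [CharZero k]
    (g : Type*) [LieRing g] [LieAlgebra k g] [FiniteDimensional k g]
    (hkill : (killingForm k g).Nondegenerate)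
    (h e : g)
    (hgrad : DirectSum.IsInternal
      ![adEigenspace k g h (-2), adEigenspace k g h 0, adEigenspace k g h 2])
    (he : e ∈ adEigenspace k g h 2)
    (hdense : Submodule.map (lieRight k g e) (adEigenspace k g h 0)
      = adEigenspace k g h 2) :
    centralizerSubmodule k g e ⊓ adEigenspace k g h (-2) = ⊥ ∧
      centralizerSubmodule k g e
        = (centralizerSubmodule k g e ⊓ adEigenspace k g h 0) ⊔ adEigenspace k g h 2 ∧
      Disjoint (centralizerSubmodule k g e ⊓ adEigenspace k g h 0)
        (adEigenspace k g h 2) := by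
  have he2 : ⁅h, e⁆ = (2:k) • e := he
  -- bracket of eigenvectors
  have brkt : ∀ (c d : k) (a b : g), ⁅h,a⁆ = c•a → ⁅h,b⁆ = d•b →
      ⁅h, ⁅a,b⁆⁆ = (c + d) • ⁅a,b⁆ := by
    intro c d a b ha hb
    rw [leibniz_lie, ha, hb, smul_lie, lie_smul, add_smul]
  -- decomposition of an arbitrary element
  have decomp : ∀ z : g, ∃ a ∈ adEigenspace k g h (-2), ∃ b ∈ adEigenspace k g h 0,
      ∃ c ∈ adEigenspace k g h 2, z = a + b + c := by
    intro z
    have htop := hgrad.submodule_iSup_eq_top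
    have hle : (⊤ : Submodule k g) ≤ adEigenspace k g h (-2) ⊔
        (adEigenspace k g h 0 ⊔ adEigenspace k g h 2) := by
      rw [← htop]
      apply iSup_le
      intro i
      fin_cases i
      · exact le_sup_left
      · simpa using le_trans le_sup_left le_sup_right
      · simpa using le_trans le_sup_right le_sup_right
    obtain ⟨a, ha, w, hw, hzw⟩ := Submodule.mem_sup.mp (hle Submodule.mem_top (x := z))
    obtain ⟨b, hb, c, hc, hwbc⟩ := Submodule.mem_sup.mp hw
    exact ⟨a, ha, b, hb, c, hc, by rw [← hzw, ← hwbc, add_assoc]⟩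
  -- zero sum of eigenvectors implies each is zero
  have zsum : ∀ a b c : g, ⁅h,a⁆ = (-2:k)•a → ⁅h,b⁆ = (0:k)•b → ⁅h,c⁆ = (2:k)•c →
      a + b + c = 0 → a = 0 ∧ b = 0 ∧ c = 0 := by
    intro a b c ha hb hc habc
    have h1 : (-2:k)•a + (2:k)•c = 0 := by
      have := congrArg (fun z => ⁅h, z⁆) habc
      simpa [lie_add, ha, hb, hc] using this
    have h2 : (4:k)•a + (4:k)•c = 0 := by
      have := congrArg (fun z => ⁅h, z⁆) h1
      simp only [lie_add, lie_smul, ha, hc, lie_zero, smul_smul] at this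
      norm_num at this
      linear_combination (norm := module) this
    have hca : c = a := by
      have h3 : (2:k) • c = (2:k) • a := by
        linear_combination (norm := module) h1
      exact smul_right_injective g (by norm_num : (2:k) ≠ 0) h3
    have ha0 : a = 0 := by
      rw [hca] at h2
      have h4 : (8:k) • a = 0 := by linear_combination (norm := module) h2
      exact (smul_eq_zero.mp h4).resolve_left (by norm_num)
    have hc0 : c = 0 := hca.trans ha0
    refine ⟨ha0, ?_, hc0⟩
    rw [ha0, hc0] at habc
    simpa using habc
  -- orthogonality of eigenspaces
  have orth : ∀ (c d : k) (a b : g), ⁅h,a⁆=c•a → ⁅h,b⁆=d•b → c + d ≠ 0 →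
      killingForm k g a b = 0 := by
    intro c d a b ha hb hcd
    have h1 : killingForm k g ⁅h,a⁆ b = - killingForm k g a ⁅h,b⁆ :=
      LieModule.traceForm_apply_lie_apply' k g g h a b
    rw [ha, hb] at h1
    simp only [map_smul, LinearMap.map_smul₂, LinearMap.smul_apply, smul_eq_mul] at h1
    have h2 : (c + d) * killingForm k g a b = 0 := by
      linear_combination h1
    exact (mul_eq_zero.mp h2).resolve_left hcd
  -- key: an element of g(-1) centralizing e is zero
  have claim1 : ∀ x : g, ⁅h,x⁆ = (-2:k)•x → ⁅x,e⁆ = 0 → x = 0 := by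
    intro x hx hxe
    apply hkill.1 x
    intro y
    obtain ⟨a, ha, b, hb, c, hc, rfl⟩ := decomp y
    have k1 : killingForm k g x a = 0 := orth _ _ _ _ hx ha (by norm_num)
    have k2 : killingForm k g x b = 0 := orth _ _ _ _ hx hb (by norm_num)
    have k3 : killingForm k g x c = 0 := by
      rw [← hdense] at hc
      obtain ⟨u, hu, rfl⟩ := hc
      have e1 : killingForm k g x ⁅u,e⁆ = killingForm k g ⁅x,u⁆ e :=
        (LieModule.traceForm_apply_lie_apply k g g x u e).symm
      have e2 : killingForm k g ⁅x,u⁆ e = - killingForm k g u ⁅x,e⁆ :=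
        LieModule.traceForm_apply_lie_apply' k g g x u e
      show killingForm k g x ⁅u,e⁆ = 0
      rw [e1, e2, hxe]
      simp
    simp [map_add, k1, k2, k3]
  -- g(1) centralizes e
  have s2ce : ∀ y : g, ⁅h,y⁆ = (2:k)•y → ⁅y,e⁆ = 0 := by
    intro y hy
    have hw : ⁅h, ⁅y,e⁆⁆ = (4:k) • ⁅y,e⁆ := by
      have := brkt 2 2 y e hy he2
      norm_num at this
      exact this
    obtain ⟨a, ha, b, hb, c, hc, hd⟩ := decomp ⁅y,e⁆
    have ha' : ⁅h,a⁆ = (-2:k)•a := ha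
    have hb' : ⁅h,b⁆ = (0:k)•b := hb
    have hc' : ⁅h,c⁆ = (2:k)•c := hc
    rw [hd] at hw
    simp only [lie_add, ha', hb', hc'] at hw
    have key : (6:k)•a + (4:k)•b + (2:k)•c = 0 := by
      linear_combination (norm := module) -hw
    obtain ⟨za, zb, zc⟩ := zsum ((6:k)•a) ((4:k)•b) ((2:k)•c)
      (by rw [lie_smul, ha', smul_comm]) (by rw [lie_smul, hb', smul_comm])
      (by rw [lie_smul, hc', smul_comm]) key
    have a0 : a = 0 := (smul_eq_zero.mp za).resolve_left (by norm_num)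
    have b0 : b = 0 := (smul_eq_zero.mp zb).resolve_left (by norm_num)
    have c0 : c = 0 := (smul_eq_zero.mp zc).resolve_left (by norm_num)
    rw [hd, a0, b0, c0]
    simp
  refine ⟨?_, ?_, ?_⟩
  · -- z(e) ⊓ g(-1) = ⊥
    rw [eq_bot_iff]
    rintro x ⟨hx1, hx2⟩
    exact claim1 x hx2 hx1
  · -- z(e) = (z(e) ⊓ g(0)) ⊔ g(1)
    apply le_antisymm
    · intro z hz
      have hze : ⁅z, e⁆ = 0 := hz
      obtain ⟨a, ha, b, hb, c, hc, rfl⟩ := decomp z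
      have hce : ⁅c, e⁆ = 0 := s2ce c hc
      have hsum : (0:g) + ⁅a,e⁆ + ⁅b,e⁆ = 0 := by
        rw [add_lie, add_lie, hce, add_zero] at hze
        rw [zero_add]
        exact hze
      obtain ⟨-, hae, hbe⟩ := zsum 0 ⁅a,e⁆ ⁅b,e⁆ (by simp)
        (by have := brkt (-2) 2 a e ha he2; norm_num at this; simpa using this)
        (by have := brkt 0 2 b e hb he2; norm_num at this; exact this) hsum
      have a0 : a = 0 := claim1 a ha hae
      rw [a0, zero_add]
      exact Submodule.add_mem _ (Submodule.mem_sup_left ⟨hbe, hb⟩)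
        (Submodule.mem_sup_right hc)
    · apply sup_le inf_le_left
      intro y hy
      exact s2ce y hy
  · -- disjointness
    rw [Submodule.disjoint_def]
    rintro x ⟨-, hx0⟩ hx2
    have hx0' : ⁅h,x⁆ = (0:k)•x := hx0
    have hx2' : ⁅h,x⁆ = (2:k)•x := hx2
    have : (2:k)•x = 0 := by rw [← hx2', hx0', zero_smul]
    exact (smul_eq_zero.mp this).resolve_left (by norm_num)
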